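/- Let α < 2, α ≠ 0, α ≠ 1, and β ≥ 0. Then for every x ∈ (−1, β] (and in the limit also x = −1), the inequality (1/(α(α−1)))·[(x+1)^α − α·x − 1] ≥ (1/2)·(β+1)^(α−2)·x² holds. -/

import Mathlib

open Set

private lemma pm_key (α x : ℝ) (hx1 : -1 < x) (hx0 : x ≠ 0) :
    ∃ d ∈ Set.Ioo (min 0 x) (max 0 x),
      (x + 1) ^ α - α * x - 1 = α * (α - 1) * (d + 1) ^ (α - 2) * x ^ 2 / 2 := by
  set f : ℝ → ℝ := fun t => (t + 1) ^ α - α * t - 1 with hfdef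
  set F : ℝ → ℝ := fun t => α * (t + 1) ^ (α - 1) - α with hFdef
  set F' : ℝ → ℝ := fun t => α * ((α - 1) * (t + 1) ^ (α - 2)) with hF'def
  have hf : ∀ t : ℝ, -1 < t → HasDerivAt f (F t) t := by
    intro t ht
    have h1 : HasDerivAt (fun t : ℝ => t + 1) 1 t := (hasDerivAt_id t).add_const 1
    have h2 := h1.rpow_const (p := α)
      (Or.inl (ne_of_gt (by linarith : (0:ℝ) < t + 1)))
    have h3 := (h2.sub ((hasDerivAt_id t).const_mul α)).sub_const 1
    exact h3.congr_deriv (by simp only [hFdef]; ring)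
  have hF : ∀ t : ℝ, -1 < t → HasDerivAt F (F' t) t := by
    intro t ht
    have h1 : HasDerivAt (fun t : ℝ => t + 1) 1 t := (hasDerivAt_id t).add_const 1
    have h2 := h1.rpow_const (p := α - 1)
      (Or.inl (ne_of_gt (by linarith : (0:ℝ) < t + 1)))
    have h3 := (h2.const_mul α).sub_const α
    have he : α - 1 - 1 = α - 2 := by ring
    rw [he] at h3
    exact h3.congr_deriv (by simp only [hF'def]; ring)
  have hf0 : f 0 = 0 := by simp [hfdef]
  have hF0 : F 0 = 0 := by simp [hFdef]
  have hg : ∀ t : ℝ, HasDerivAt (fun t : ℝ => t ^ 2) (2 * t) t := by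
    intro t; simpa using hasDerivAt_pow 2 t
  rcases lt_or_gt_of_ne hx0 with hx | hx
  · -- x < 0, interval [x, 0]
    obtain ⟨c, hc, hceq⟩ := exists_ratio_hasDerivAt_eq_ratio_slope f F hx
      (fun t ht => (hf t (by have := ht.1; linarith)).continuousAt.continuousWithinAt)
      (fun t ht => hf t (by have := ht.1; linarith))
      (fun t => t ^ 2) (fun t => 2 * t)
      (continuous_pow 2).continuousOn (fun t _ => hg t)
    obtain ⟨d, hd, hdeq⟩ := exists_ratio_hasDerivAt_eq_ratio_slope F F' hc.2
      (fun t ht => (hF t (by have := ht.1; have := hc.1; linarith)).continuousAt.continuousWithinAt)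
      (fun t ht => hF t (by have := ht.1; have := hc.1; linarith))
      (fun t => t) (fun _ => 1) continuous_id.continuousOn
      (fun t _ => hasDerivAt_id t)
    refine ⟨d, ?_, ?_⟩
    · rw [min_eq_right hx.le, max_eq_left hx.le]
      exact ⟨lt_trans hc.1 hd.1, hd.2⟩
    · have hcne : c ≠ 0 := ne_of_lt hc.2
      simp only [hf0, hF0] at hceq hdeq
      have hFc : F c = c * F' d := by linarith [hdeq]
      have key : c * (x ^ 2 * F' d - 2 * f x) = 0 := by
        rw [hFc] at hceq
        linear_combination -hceq
      have h4 := (mul_eq_zero.1 key).resolve_left hcne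
      show f x = _
      rw [hF'def] at h4
      linear_combination (-1/2 : ℝ) * h4
  · -- x > 0, interval [0, x]
    obtain ⟨c, hc, hceq⟩ := exists_ratio_hasDerivAt_eq_ratio_slope f F hx
      (fun t ht => (hf t (by have := ht.1; linarith)).continuousAt.continuousWithinAt)
      (fun t ht => hf t (by have := ht.1; linarith))
      (fun t => t ^ 2) (fun t => 2 * t)
      (continuous_pow 2).continuousOn (fun t _ => hg t)
    obtain ⟨d, hd, hdeq⟩ := exists_ratio_hasDerivAt_eq_ratio_slope F F' hc.1
      (fun t ht => (hF t (by have := ht.1; linarith)).continuousAt.continuousWithinAt)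
      (fun t ht => hF t (by have := ht.1; linarith))
      (fun t => t) (fun _ => 1) continuous_id.continuousOn
      (fun t _ => hasDerivAt_id t)
    refine ⟨d, ?_, ?_⟩
    · rw [min_eq_left hx.le, max_eq_right hx.le]
      exact ⟨hd.1, lt_trans hd.2 hc.2⟩
    · have hcne : c ≠ 0 := ne_of_gt hc.1
      simp only [hf0, hF0] at hceq hdeq
      have hFc : F c = c * F' d := by linarith [hdeq]
      have key : c * (x ^ 2 * F' d - 2 * f x) = 0 := by
        rw [hFc] at hceq
        linear_combination hceq
      have h4 := (mul_eq_zero.1 key).resolve_left hcne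
      show f x = _
      rw [hF'def] at h4
      linear_combination (-1/2 : ℝ) * h4

theorem power_mean_inequality (α β x : ℝ) (hα2 : α < 2) (hα0 : α ≠ 0) (hα1 : α ≠ 1)
    (hβ : 0 ≤ β) (hx1 : -1 < x) (hxβ : x ≤ β) :
    (1 / (α * (α - 1))) * ((x + 1) ^ α - α * x - 1) ≥
      (1 / 2) * (β + 1) ^ (α - 2) * x ^ 2 := by
  rcases eq_or_ne x 0 with rfl | hx0
  · simp [Real.one_rpow]
  obtain ⟨d, hd, heq⟩ := pm_key α x hx1 hx0
  have hd1 : -1 < d := by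
    rcases le_or_gt 0 x with h | h
    · have := hd.1; rw [min_eq_left h] at this; linarith
    · have := hd.1; rw [min_eq_right h.le] at this; linarith
  have hdβ : d ≤ β := by
    have h2 := hd.2
    have hm : max 0 x ≤ β := max_le hβ hxβ
    linarith
  have hr : (β + 1) ^ (α - 2) ≤ (d + 1) ^ (α - 2) :=
    Real.rpow_le_rpow_of_nonpos (by linarith) (by linarith) (by linarith)
  have hne : α * (α - 1) ≠ 0 := mul_ne_zero hα0 (sub_ne_zero.2 hα1)
  rw [heq, ge_iff_le]
  calc (1:ℝ) / 2 * (β + 1) ^ (α - 2) * x ^ 2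
      ≤ 1 / 2 * (d + 1) ^ (α - 2) * x ^ 2 :=
        mul_le_mul_of_nonneg_right
          (mul_le_mul_of_nonneg_left hr (by norm_num)) (sq_nonneg x)
    _ = 1 / (α * (α - 1)) * (α * (α - 1) * (d + 1) ^ (α - 2) * x ^ 2 / 2) := by
        field_simp
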